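/- Hennessy–Milner theorem for LEA: if M and M' are image-finite models, s a world of M and s' a world of M', then (M,s) and (M',s') satisfy the same LEA-formulas if and only if (M,s) and (M',s') are ∘-bisimilar. -/

import Mathlib

/-- The language LEA of essence and accident. -/
inductive LEAForm : Type
  | atom : ℕ → LEAForm
  | neg : LEAForm → LEAForm
  | and : LEAForm → LEAForm → LEAForm
  | ess : LEAForm → LEAForm

/-- A Kripke model (the frame is (W, R)). -/
structure Model (W : Type) where
  R : W → W → Prop
  V : ℕ → W → Prop

/-- Satisfaction for LEA. -/
def satLEA {W : Type} (M : Model W) : W → LEAForm → Prop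
  | w, .atom p => M.V p w
  | w, .neg φ => ¬ satLEA M w φ
  | w, .and φ ψ => satLEA M w φ ∧ satLEA M w ψ
  | w, .ess φ => satLEA M w φ → ∀ v, M.R w v → satLEA M v φ

def isCircBisim {W : Type} (M : Model W) (Z : W → W → Prop) : Prop :=
  (∃ a b, Z a b) ∧
  ∀ s s', Z s s' →
    ((∀ p, M.V p s ↔ M.V p s') ∧
     (∀ t, M.R s t → ¬ Z s t → ∃ t', M.R s' t' ∧ Z t t') ∧
     (∀ t', M.R s' t' → ¬ Z s' t' → ∃ t, M.R s t ∧ Z t t'))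

/-- The disjoint union of two models. -/
def dsum {W W' : Type} (M : Model W) (M' : Model W') : Model (W ⊕ W') where
  R x y :=
    match x, y with
    | Sum.inl a, Sum.inl b => M.R a b
    | Sum.inr a, Sum.inr b => M'.R a b
    | _, _ => False
  V p x :=
    match x with
    | Sum.inl a => M.V p a
    | Sum.inr a => M'.V p a

/-- (M,s) and (M',s') are ∘-bisimilar: some ∘-bisimulation on the disjoint
union of M and M' relates s to s'. -/
def circBisimilar {W W' : Type} (M : Model W) (s : W) (M' : Model W') (s' : W') : Prop :=
  ∃ Z, isCircBisim (dsum M M') Z ∧ Z (Sum.inl s) (Sum.inr s')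

/-- A ∘-bisimulation preserves all LEA formulas. -/
lemma bisim_preserves {W : Type} (N : Model W) (Z : W → W → Prop)
    (hZ : ∀ s s', Z s s' →
      ((∀ p, N.V p s ↔ N.V p s') ∧
       (∀ t, N.R s t → ¬ Z s t → ∃ t', N.R s' t' ∧ Z t t') ∧
       (∀ t', N.R s' t' → ¬ Z s' t' → ∃ t, N.R s t ∧ Z t t'))) :
    ∀ (φ : LEAForm) (x y : W), Z x y → (satLEA N x φ ↔ satLEA N y φ) := by
  intro φ
  induction φ with
  | atom p => intro x y hxy; exact (hZ x y hxy).1 p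
  | neg φ ih => intro x y hxy; exact not_congr (ih x y hxy)
  | and φ ψ ih1 ih2 => intro x y hxy; exact and_congr (ih1 x y hxy) (ih2 x y hxy)
  | ess φ ih =>
    intro x y hxy
    constructor
    · intro hx hy t' hRt'
      have hxφ : satLEA N x φ := (ih x y hxy).2 hy
      by_cases hzt : Z y t'
      · exact (ih y t' hzt).1 hy
      · obtain ⟨t, hRt, hZ'⟩ := (hZ x y hxy).2.2 t' hRt' hzt
        exact (ih t t' hZ').1 (hx hxφ t hRt)
    · intro hy hx t hRt
      have hyφ : satLEA N y φ := (ih x y hxy).1 hx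
      by_cases hzt : Z x t
      · exact (ih x t hzt).1 hx
      · obtain ⟨t', hRt', hZ'⟩ := (hZ x y hxy).2.1 t hRt hzt
        exact (ih t t' hZ').2 (hy hyφ t' hRt')

lemma sat_inl {W W' : Type} (M : Model W) (M' : Model W') (φ : LEAForm) :
    ∀ w, satLEA (dsum M M') (Sum.inl w) φ ↔ satLEA M w φ := by
  induction φ with
  | atom p => intro w; exact Iff.rfl
  | neg φ ih => intro w; exact not_congr (ih w)
  | and φ ψ ih1 ih2 => intro w; exact and_congr (ih1 w) (ih2 w)
  | ess φ ih =>
    intro w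
    constructor
    · intro h hw v hv
      exact (ih v).1 (h ((ih w).2 hw) (Sum.inl v) hv)
    · intro h hw v hv
      match v, hv with
      | Sum.inl v, hv => exact (ih v).2 (h ((ih w).1 hw) v hv)

lemma sat_inr {W W' : Type} (M : Model W) (M' : Model W') (φ : LEAForm) :
    ∀ w, satLEA (dsum M M') (Sum.inr w) φ ↔ satLEA M' w φ := by
  induction φ with
  | atom p => intro w; exact Iff.rfl
  | neg φ ih => intro w; exact not_congr (ih w)
  | and φ ψ ih1 ih2 => intro w; exact and_congr (ih1 w) (ih2 w)
  | ess φ ih =>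
    intro w
    constructor
    · intro h hw v hv
      exact (ih v).1 (h ((ih w).2 hw) (Sum.inr v) hv)
    · intro h hw v hv
      match v, hv with
      | Sum.inr v, hv => exact (ih v).2 (h ((ih w).1 hw) v hv)

/-- Conjunction of a list of formulas. -/
def conjList : List LEAForm → LEAForm
  | [] => .neg (.and (.atom 0) (.neg (.atom 0)))
  | φ :: l => .and φ (conjList l)

lemma sat_conjList {W : Type} (N : Model W) (w : W) :
    ∀ l : List LEAForm, satLEA N w (conjList l) ↔ ∀ φ ∈ l, satLEA N w φ := by
  intro l
  induction l with
  | nil => simp [conjList, satLEA]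
  | cons φ l ih =>
    simp only [conjList, satLEA, ih, List.mem_cons]
    constructor
    · rintro ⟨h1, h2⟩ ψ (rfl | h) <;> [exact h1; exact h2 ψ h]
    · intro h; exact ⟨h φ (Or.inl rfl), fun ψ hψ => h ψ (Or.inr hψ)⟩

/-- If two worlds are not LEA-equivalent, there is a formula true at the first,
false at the second. -/
lemma exists_sep {W : Type} (N : Model W) (x y : W)
    (h : ¬ ∀ φ, satLEA N x φ ↔ satLEA N y φ) :
    ∃ δ, satLEA N x δ ∧ ¬ satLEA N y δ := by
  push_neg at h
  obtain ⟨φ, hφ⟩ := h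
  rcases hφ with ⟨h1, h2⟩ | ⟨h1, h2⟩
  · exact ⟨φ, h1, h2⟩
  · exact ⟨.neg φ, h1, fun hy => hy h2⟩

/-- The crucial "forth" property of LEA-equivalence on image-finite models. -/
lemma forth {W : Type} (N : Model W) (hfin : ∀ w, {v | N.R w v}.Finite)
    (s s' : W) (hE : ∀ φ, satLEA N s φ ↔ satLEA N s' φ)
    (t : W) (hRt : N.R s t) (hne : ¬ ∀ φ, satLEA N s φ ↔ satLEA N t φ) :
    ∃ t', N.R s' t' ∧ ∀ φ, satLEA N t φ ↔ satLEA N t' φ := by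
  by_contra hno
  obtain ⟨δ, hsδ, htδ⟩ := exists_sep N s t hne
  -- for each successor t' of s', pick a separating formula
  have hsep : ∀ t', N.R s' t' → ∃ χ, satLEA N t χ ∧ ¬ satLEA N t' χ := by
    intro t' hR
    exact exists_sep N t t' (fun h => hno ⟨t', hR, h⟩)
  classical
  let χ : W → LEAForm := fun t' =>
    if h : ∃ c, satLEA N t c ∧ ¬ satLEA N t' c then h.choose else .atom 0
  have hχ1 : ∀ t', N.R s' t' → satLEA N t (χ t') ∧ ¬ satLEA N t' (χ t') := by
    intro t' hR
    have h := hsep t' hR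
    simp only [χ, dif_pos h]
    exact h.choose_spec
  -- list of successors of s'
  let l : List W := (hfin s').toFinset.toList
  have hmem : ∀ t', t' ∈ l ↔ N.R s' t' := by
    intro t'
    simp [l, Set.Finite.mem_toFinset]
  -- the formula θ = δ ∨ ¬ conj
  set θ : LEAForm := .neg (.and (.neg δ) (conjList (l.map χ))) with hθ
  have satθ : ∀ w, satLEA N w θ ↔ (satLEA N w δ ∨ ¬ satLEA N w (conjList (l.map χ))) := by
    intro w
    simp only [θ, satLEA]
    tauto
  -- s satisfies θ, t does not
  have hsθ : satLEA N s θ := (satθ s).2 (Or.inl hsδ)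
  have htθ : ¬ satLEA N t θ := by
    rw [satθ]
    push_neg
    refine ⟨htδ, ?_⟩
    rw [sat_conjList]
    intro ψ hψ
    simp only [List.mem_map] at hψ
    obtain ⟨t', ht', rfl⟩ := hψ
    exact (hχ1 t' ((hmem t').1 ht')).1
  -- so s does not satisfy ∘θ
  have hsess : ¬ satLEA N s (.ess θ) := by
    intro h
    exact htθ (h hsθ t hRt)
  -- but s' does satisfy ∘θ
  have hs'ess : satLEA N s' (.ess θ) := by
    intro _ v hv
    rw [satθ]
    refine Or.inr ?_
    rw [sat_conjList]
    push_neg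
    refine ⟨χ v, List.mem_map_of_mem (f := χ) ((hmem v).2 hv), (hχ1 v hv).2⟩
  exact hsess ((hE (.ess θ)).2 hs'ess)

/-- Hennessy–Milner theorem for LEA: on image-finite models, ∘-equivalence
coincides with ∘-bisimilarity. -/
theorem stmt13 (W W' : Type) [Nonempty W] [Nonempty W']
    (M : Model W) (M' : Model W')
    (hM : ∀ w : W, {v | M.R w v}.Finite) (hM' : ∀ w : W', {v | M'.R w v}.Finite)
    (s : W) (s' : W') :
    (∀ φ : LEAForm, satLEA M s φ ↔ satLEA M' s' φ) ↔ circBisimilar M s M' s' := by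
  set N := dsum M M' with hN
  have hNfin : ∀ w, {v | N.R w v}.Finite := by
    rintro (w | w)
    · have : {v | N.R (Sum.inl w) v} ⊆ Sum.inl '' {v | M.R w v} := by
        rintro (v | v) hv
        · exact ⟨v, hv, rfl⟩
        · exact absurd hv (by simp [N, dsum])
      exact Set.Finite.subset ((hM w).image _) this
    · have : {v | N.R (Sum.inr w) v} ⊆ Sum.inr '' {v | M'.R w v} := by
        rintro (v | v) hv
        · exact absurd hv (by simp [N, dsum])
        · exact ⟨v, hv, rfl⟩
      exact Set.Finite.subset ((hM' w).image _) this
  constructor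
  · intro hEq
    refine ⟨fun x y => ∀ φ, satLEA N x φ ↔ satLEA N y φ, ⟨⟨Sum.inl s, Sum.inr s', ?_⟩, ?_⟩, ?_⟩
    · intro φ
      exact (sat_inl M M' φ s).trans ((hEq φ).trans (sat_inr M M' φ s').symm)
    · intro x y hxy
      refine ⟨fun p => hxy (.atom p), ?_, ?_⟩
      · intro t hRt hne
        exact forth N hNfin x y hxy t hRt hne
      · intro t' hRt' hne
        obtain ⟨t, hRt, hE⟩ := forth N hNfin y x (fun φ => (hxy φ).symm) t' hRt' hne
        exact ⟨t, hRt, fun φ => (hE φ).symm⟩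
    · intro φ
      exact (sat_inl M M' φ s).trans ((hEq φ).trans (sat_inr M M' φ s').symm)
  · rintro ⟨Z, ⟨_, hZ⟩, hss'⟩
    intro φ
    have := bisim_preserves N Z hZ φ (Sum.inl s) (Sum.inr s') hss'
    rw [sat_inl, sat_inr] at this
    exact this
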